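/- Let Ω ⊆ ℝ² be a bounded open set, let c be a Poisson solution on Ω, and suppose the open disc of radius L > 0 centered at P is contained in Ω while Q ∈ ∂Ω satisfies ‖P − Q‖ = L. Let v = (P − Q)/L. Then c(Q + t·v) ≥ (K/(4D))·(2Lt − t²) for every t ∈ [0, L]. Consequently, if the extension of c to the closure of Ω is differentiable at Q, then the directional derivative of c at Q in the direction v is at least (K/(2D))·L, and in particular ‖∇c(Q)‖ ≥ (K/(2D))·L. -/

import Mathlib

open Metric Set Filter
open scoped Matrix RealInnerProductSpace Topology

noncomputable section

/-- The Euclidean plane ℝ². -/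
abbrev E2 := EuclideanSpace ℝ (Fin 2)

/-- The Laplacian `c_xx + c_yy` of a function on the plane. -/
noncomputable def lap (c : E2 → ℝ) (p : E2) : ℝ :=
  ∑ i : Fin 2, fderiv ℝ (fun q => fderiv ℝ c q (EuclideanSpace.single i 1)) p
    (EuclideanSpace.single i 1)

/-- A Poisson solution on a bounded open set `Ω ⊆ ℝ²` (for fixed constants `K, D`):
continuous on the closure of `Ω`, twice continuously differentiable on `Ω`,
satisfying `Δc = -K/D` on `Ω` and `c = 0` on the boundary `∂Ω`. -/
structure IsPoissonSolution (K D : ℝ) (Ω : Set E2) (c : E2 → ℝ) : Prop where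
  contOn : ContinuousOn c (closure Ω)
  smooth : ContDiffOn ℝ 2 c Ω
  eqn : ∀ p ∈ Ω, lap c p = -(K / D)
  bdry : ∀ p ∈ frontier Ω, c p = 0

/-- At a local min at 0, the second derivative is nonnegative. -/
lemma secondDeriv_nonneg_of_isLocalMin {g g' : ℝ → ℝ} {a : ℝ}
    (hg : ∀ᶠ s in 𝓝 (0:ℝ), HasDerivAt g (g' s) s)
    (hg' : HasDerivAt g' a 0) (hmin : IsLocalMin g 0) : 0 ≤ a := by
  by_contra hlt
  push_neg at hlt
  have hg0 : g' 0 = 0 := hmin.hasDerivAt_eq_zero hg.self_of_nhds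
  -- slope of g' tends to a
  have hslope : Tendsto (fun s => g' s / s) (𝓝[≠] (0:ℝ)) (𝓝 a) := by
    have := hasDerivAt_iff_tendsto_slope.mp hg'
    refine this.congr' ?_
    filter_upwards [self_mem_nhdsWithin] with s hs
    rw [slope_def_field, hg0, sub_zero, sub_zero]
  have hev : ∀ᶠ s in 𝓝[>] (0:ℝ), g' s / s < a / 2 := by
    have : ∀ᶠ s in 𝓝[≠] (0:ℝ), g' s / s < a / 2 :=
      hslope.eventually_lt_const (by linarith)
    exact this.filter_mono (nhdsWithin_mono _ fun s hs => ne_of_gt hs)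
  -- extract a positive radius where everything holds
  obtain ⟨ε₁, hε₁, H1⟩ := Metric.eventually_nhds_iff.mp hg
  obtain ⟨ε₂, hε₂, H2⟩ := Metric.eventually_nhds_iff.mp (hmin.filter_mono (le_refl _) : ∀ᶠ s in 𝓝 (0:ℝ), g 0 ≤ g s)
  obtain ⟨ε₃, hε₃, H3⟩ := Metric.eventually_nhds_iff.mp (eventually_nhdsWithin_iff.mp hev)
  set δ := min (min ε₁ ε₂) ε₃ / 2 with hδdef
  have hδ : 0 < δ := by positivity
  have hδ1 : δ < ε₁ := by
    have : δ ≤ min (min ε₁ ε₂) ε₃ / 2 := le_of_eq rfl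
    have h' : min (min ε₁ ε₂) ε₃ ≤ ε₁ := le_trans (min_le_left _ _) (min_le_left _ _)
    nlinarith [hε₃, hε₂, hε₁]
  have hδ2 : δ < ε₂ := by
    have h' : min (min ε₁ ε₂) ε₃ ≤ ε₂ := le_trans (min_le_left _ _) (min_le_right _ _)
    nlinarith
  have hδ3 : δ < ε₃ := by
    have h' : min (min ε₁ ε₂) ε₃ ≤ ε₃ := min_le_right _ _
    nlinarith
  -- g is strictly decreasing on [0, δ]
  have hanti : StrictAntiOn g (Icc 0 δ) := by
    apply strictAntiOn_of_deriv_neg (convex_Icc 0 δ)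
    · intro x hx
      have hx' : |x| < ε₁ := by
        rw [abs_of_nonneg hx.1]; exact lt_of_le_of_lt hx.2 hδ1
      exact (H1 (by simpa [Real.dist_eq] using hx')).continuousAt.continuousWithinAt
    · intro x hx
      rw [interior_Icc] at hx
      have hx1 : |x| < ε₁ := by rw [abs_of_pos hx.1]; exact lt_trans hx.2 hδ1
      have hx3 : |x| < ε₃ := by rw [abs_of_pos hx.1]; exact lt_trans hx.2 hδ3
      have hd := H1 (by simpa [Real.dist_eq] using hx1)
      rw [hd.deriv]
      have := H3 (by simpa [Real.dist_eq] using hx3) hx.1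
      have hxpos := hx.1
      have : g' x < a / 2 * x := by
        rw [div_lt_iff₀ hxpos] at this; linarith
      nlinarith
  have : g δ < g 0 := hanti (by constructor <;> [exact le_refl 0; exact hδ.le]) ⟨hδ.le, le_refl δ⟩ hδ
  have : g 0 ≤ g δ := H2 (by simpa [Real.dist_eq, abs_of_pos hδ] using hδ2)
  linarith

/-- On an open set where `c` is C², the directional second derivative data. -/
lemma dir_second_deriv {U : Set E2} (hU : IsOpen U) {c : E2 → ℝ}
    (hsm : ContDiffOn ℝ 2 c U) {p : E2} (hp : p ∈ U) (e : E2) :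
    (∀ᶠ s in 𝓝 (0:ℝ), HasDerivAt (fun s => c (p + s • e))
        (fderiv ℝ c (p + s • e) e) s) ∧
      HasDerivAt (fun s : ℝ => fderiv ℝ c (p + s • e) e)
        (fderiv ℝ (fun q => fderiv ℝ c q e) p e) 0 := by
  have hca : ∀ x ∈ U, ContDiffAt ℝ 2 c x := fun x hx => (hsm x hx).contDiffAt (hU.mem_nhds hx)
  have hγ : ∀ s : ℝ, HasDerivAt (fun s : ℝ => p + s • e) e s := fun s => by
    have h1 : HasDerivAt (fun s : ℝ => s • e) ((1:ℝ) • e) s := (hasDerivAt_id s).smul_const e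
    simpa using h1.const_add p
  have hUev : ∀ᶠ s in 𝓝 (0:ℝ), p + s • e ∈ U := by
    have hcont : Continuous fun s : ℝ => p + s • e :=
      continuous_const.add (continuous_id.smul continuous_const)
    have : (fun s : ℝ => p + s • e) ⁻¹' U ∈ 𝓝 (0:ℝ) :=
      hcont.continuousAt.preimage_mem_nhds (by simpa using hU.mem_nhds hp)
    exact this
  constructor
  · filter_upwards [hUev] with s hs
    have hd : DifferentiableAt ℝ c (p + s • e) :=
      (hca _ hs).differentiableAt (by norm_num)
    exact hd.hasFDerivAt.comp_hasDerivAt s (hγ s)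
  · -- φ = fun q => fderiv ℝ c q e is differentiable at p
    have h1 : ContDiffAt ℝ 1 (fderiv ℝ c) p := (hca p hp).fderiv_right (by norm_num)
    have h2 : ContDiffAt ℝ 1 (fun q => fderiv ℝ c q e) p := by
      exact (ContinuousLinearMap.apply ℝ ℝ e).contDiff.contDiffAt.comp p h1
    have hφ : DifferentiableAt ℝ (fun q => fderiv ℝ c q e) p :=
      h2.differentiableAt (by norm_num)
    have h0 : p = p + (0:ℝ) • e := by simp
    rw [h0] at hφ
    have := hφ.hasFDerivAt.comp_hasDerivAt 0 (hγ 0)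
    rw [← h0] at this
    simpa [Function.comp_def] using this

/-- Minimum principle for strictly superharmonic functions. -/
lemma min_principle {U : Set E2} (hU : IsOpen U) (hUb : Bornology.IsBounded U)
    {c : E2 → ℝ} (hcont : ContinuousOn c (closure U)) (hsm : ContDiffOn ℝ 2 c U)
    (hlap : ∀ p ∈ U, lap c p < 0) {m : ℝ} (hb : ∀ p ∈ frontier U, m ≤ c p) :
    ∀ x ∈ closure U, m ≤ c x := by
  rcases eq_empty_or_nonempty U with rfl | hne
  · simp
  have hcc : IsCompact (closure U) := hUb.isCompact_closure
  obtain ⟨x₀, hx₀mem, hx₀⟩ := hcc.exists_isMinOn hne.closure hcont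
  have hx₀U : x₀ ∉ U := by
    intro hx₀U
    -- x₀ is a local min of c (as a function on E2): U open, c min on closure U ⊇ U
    suffices h : 0 ≤ lap c x₀ by exact absurd (hlap x₀ hx₀U) (not_lt.mpr h)
    have hterm : ∀ i : Fin 2, 0 ≤ fderiv ℝ (fun q => fderiv ℝ c q (EuclideanSpace.single i 1)) x₀
        (EuclideanSpace.single i 1) := by
      intro i
      obtain ⟨h1, h2⟩ := dir_second_deriv hU hsm hx₀U (EuclideanSpace.single i 1)
      apply secondDeriv_nonneg_of_isLocalMin h1 h2
      -- local min of s ↦ c (x₀ + s • e) at 0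
      have hUev : ∀ᶠ s in 𝓝 (0:ℝ), x₀ + s • (EuclideanSpace.single i 1 : E2) ∈ U := by
        have hcont' : Continuous fun s : ℝ => x₀ + s • (EuclideanSpace.single i 1 : E2) :=
          continuous_const.add (continuous_id.smul continuous_const)
        exact hcont'.continuousAt.preimage_mem_nhds (by simpa using hU.mem_nhds hx₀U)
      filter_upwards [hUev] with s hs
      simpa using hx₀ (subset_closure hs)
    exact Finset.sum_nonneg fun i _ => hterm i
  have hx₀f : x₀ ∈ frontier U := by
    rw [frontier, hU.interior_eq]; exact ⟨hx₀mem, hx₀U⟩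
  intro x hx
  exact le_trans (hb x₀ hx₀f) (hx₀ hx)


lemma q0_hasFDerivAt (P x : E2) :
    HasFDerivAt (fun x : E2 => ⟪x - P, x - P⟫)
      (2 • (innerSL ℝ (x - P))) x := by
  have hid : HasFDerivAt (fun x : E2 => x - P) (ContinuousLinearMap.id ℝ E2) x :=
    (hasFDerivAt_id x).sub_const P
  have := hid.inner ℝ hid
  refine this.congr_fderiv ?_
  ext e
  simp [fderivInnerCLM_apply, real_inner_comm, two_smul]
  rw [inner_sub_right, real_inner_comm e x, real_inner_comm e P]
lemma q0_fderiv_apply (P x e : E2) :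
    fderiv ℝ (fun x : E2 => ⟪x - P, x - P⟫) x e = 2 * ⟪x - P, e⟫ := by
  rw [(q0_hasFDerivAt P x).fderiv]
  simp [two_smul, inner_sub_left]
  ring

lemma lin_hasFDerivAt (P x e : E2) :
    HasFDerivAt (fun x : E2 => 2 * ⟪x - P, e⟫) (2 • (innerSL ℝ e)) x := by
  have hid : HasFDerivAt (fun x : E2 => x - P) (ContinuousLinearMap.id ℝ E2) x :=
    (hasFDerivAt_id x).sub_const P
  have hconst : HasFDerivAt (fun _ : E2 => e) (0 : E2 →L[ℝ] E2) x := hasFDerivAt_const e x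
  have := (hid.inner ℝ hconst).const_mul (2:ℝ)
  refine this.congr_fderiv ?_
  ext u
  simp [fderivInnerCLM_apply, real_inner_comm]

/-- Laplacian of `c + β * ‖x - P‖²` (via the inner product). -/
lemma lap_add_quad {U : Set E2} (hU : IsOpen U) {c : E2 → ℝ}
    (hsm : ContDiffOn ℝ 2 c U) {p : E2} (hp : p ∈ U) (P : E2) (β : ℝ) :
    lap (fun x => c x + β * ⟪x - P, x - P⟫) p = lap c p + 4 * β := by
  have hca : ∀ x ∈ U, ContDiffAt ℝ 2 c x := fun x hx => (hsm x hx).contDiffAt (hU.mem_nhds hx)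
  have hdc : ∀ x ∈ U, DifferentiableAt ℝ c x := fun x hx =>
    (hca x hx).differentiableAt (by norm_num)
  have key : ∀ e : E2,
      fderiv ℝ (fun q => fderiv ℝ (fun x => c x + β * ⟪x - P, x - P⟫) q e) p e
        = fderiv ℝ (fun q => fderiv ℝ c q e) p e + 2 * β * ⟪e, e⟫ := by
    intro e
    -- the inner function agrees with x ↦ fderiv c x e + β * (2⟪x-P,e⟫) on U
    have hEq : (fun q => fderiv ℝ (fun x => c x + β * ⟪x - P, x - P⟫) q e)
        =ᶠ[𝓝 p] fun q => fderiv ℝ c q e + β * (2 * ⟪q - P, e⟫) := by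
      filter_upwards [hU.mem_nhds hp] with x hx
      have h1 : HasFDerivAt (fun x => c x + β * ⟪x - P, x - P⟫)
          (fderiv ℝ c x + β • (2 • (innerSL ℝ (x - P)))) x :=
        (hdc x hx).hasFDerivAt.add ((q0_hasFDerivAt P x).const_mul β)
      rw [h1.fderiv]
      simp only [ContinuousLinearMap.add_apply, ContinuousLinearMap.smul_apply,
        innerSL_apply_apply, smul_eq_mul]
      ring
    rw [hEq.fderiv_eq]
    -- differentiability of each summand at p
    have hφ : DifferentiableAt ℝ (fun q => fderiv ℝ c q e) p := by
      have h1 : ContDiffAt ℝ 1 (fderiv ℝ c) p := (hca p hp).fderiv_right (by norm_num)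
      exact ((ContinuousLinearMap.apply ℝ ℝ e).contDiff.contDiffAt.comp p h1).differentiableAt
        (by norm_num)
    have hψ : DifferentiableAt ℝ (fun q : E2 => 2 * ⟪q - P, e⟫) p :=
      (lin_hasFDerivAt P p e).differentiableAt
    rw [fderiv_fun_add hφ (hψ.const_mul β)]
    rw [ContinuousLinearMap.add_apply]
    congr 1
    rw [fderiv_const_mul hψ, (lin_hasFDerivAt P p e).fderiv]
    simp [real_inner_comm]
    ring
  unfold lap
  have hterm : ∀ i : Fin 2,
      fderiv ℝ (fun q => fderiv ℝ (fun x => c x + β * ⟪x - P, x - P⟫) q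
          (EuclideanSpace.single i 1)) p (EuclideanSpace.single i 1)
        = fderiv ℝ (fun q => fderiv ℝ c q (EuclideanSpace.single i 1)) p
            (EuclideanSpace.single i 1) + 2 * β := by
    intro i
    rw [key]
    have h1 : ⟪(EuclideanSpace.single i (1:ℝ) : E2), (EuclideanSpace.single i (1:ℝ) : E2)⟫ = 1 := by
      rw [real_inner_self_eq_norm_sq, EuclideanSpace.norm_single]
      norm_num
    rw [h1]
    ring
  rw [Finset.sum_congr rfl fun i _ => hterm i, Finset.sum_add_distrib,
    Finset.sum_const, Finset.card_univ, Fintype.card_fin]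
  push_cast
  ring

lemma deriv_nonneg_at_left {f : ℝ → ℝ} {a L : ℝ} (hL : 0 < L)
    (hf : HasDerivWithinAt f a (Icc 0 L) 0) (h0 : f 0 = 0)
    (hpos : ∀ t ∈ Icc 0 L, 0 ≤ f t) : 0 ≤ a := by
  have hT : Tendsto (slope f 0) (𝓝[Icc 0 L \ {0}] 0) (𝓝 a) :=
    hasDerivWithinAt_iff_tendsto_slope.mp hf
  have hsub : Ioc (0:ℝ) L ⊆ Icc 0 L \ {0} := fun t ht => ⟨⟨ht.1.le, ht.2⟩, ne_of_gt ht.1⟩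
  have hT' : Tendsto (slope f 0) (𝓝[Ioc (0:ℝ) L] 0) (𝓝 a) :=
    hT.mono_left (nhdsWithin_mono _ hsub)
  have hne : (𝓝[Ioc (0:ℝ) L] (0:ℝ)).NeBot := by
    rw [← mem_closure_iff_nhdsWithin_neBot, closure_Ioc hL.ne]
    exact ⟨le_refl 0, hL.le⟩
  refine ge_of_tendsto hT' ?_
  filter_upwards [self_mem_nhdsWithin] with t ht
  rw [slope_def_field, h0, sub_zero, sub_zero]
  exact div_nonneg (hpos t ⟨ht.1.le, ht.2⟩) ht.1.le

/-- The barrier bound on the closed ball. -/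
lemma barrier_bound (K D L : ℝ) (hK : 0 < K) (hD : 0 < D) (hL : 0 < L)
    (Ω : Set E2) (hΩ : IsOpen Ω) (hΩb : Bornology.IsBounded Ω)
    (c : E2 → ℝ) (hc : IsPoissonSolution K D Ω c)
    (P : E2) (hball : Metric.ball P L ⊆ Ω) :
    ∀ x ∈ closedBall P L, K / (4 * D) * (L ^ 2 - ⟪x - P, x - P⟫) ≤ c x := by
  have hKD : 0 < K / D := div_pos hK hD
  -- c ≥ 0 on closure Ω
  have hpos : ∀ x ∈ closure Ω, 0 ≤ c x := by
    apply min_principle hΩ hΩb hc.contOn hc.smooth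
    · intro p hp; rw [hc.eqn p hp]; linarith
    · intro p hp; rw [hc.bdry p hp]
  have hclb : closedBall P L ⊆ closure Ω := by
    rw [← closure_ball P (ne_of_gt hL)]
    exact closure_mono hball
  -- ε-perturbed barrier
  have hstep : ∀ ε : ℝ, 0 < ε → ∀ x ∈ closedBall P L,
      (K / (4 * D) - ε) * (L ^ 2 - ⟪x - P, x - P⟫) ≤ c x := by
    intro ε hε x hx
    set β := K / (4 * D) - ε with hβ
    have hq0 : ContDiff ℝ 2 (fun x : E2 => β * ⟪x - P, x - P⟫) :=
      contDiff_const.mul (((contDiff_id.sub contDiff_const).inner ℝ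
        (contDiff_id.sub contDiff_const)))
    have hmin := min_principle (U := ball P L) isOpen_ball isBounded_ball
      (c := fun x => c x + β * ⟪x - P, x - P⟫)
      (by
        rw [closure_ball P (ne_of_gt hL)]
        exact (hc.contOn.mono hclb).add (hq0.continuous.continuousOn))
      ((hc.smooth.mono hball).add (hq0.contDiffOn))
      (by
        intro p hp
        rw [lap_add_quad isOpen_ball (hc.smooth.mono hball) hp P β,
          hc.eqn p (hball hp), hβ]
        have : -(K / D) + 4 * (K / (4 * D) - ε) = -(4 * ε) := by field_simp; ring
        rw [this]; linarith)
      (m := β * L ^ 2)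
      (by
        intro p hp
        rw [frontier_ball P (ne_of_gt hL)] at hp
        have hnorm : ‖p - P‖ = L := by rwa [mem_sphere_iff_norm] at hp
        have hI : ⟪p - P, p - P⟫ = L ^ 2 := by
          rw [real_inner_self_eq_norm_sq, hnorm]
        have hcp := hpos p (hclb (sphere_subset_closedBall hp))
        show β * L ^ 2 ≤ c p + β * ⟪p - P, p - P⟫
        rw [hI]
        linarith)
    rw [closure_ball P (ne_of_gt hL)] at hmin
    have h2 : β * L ^ 2 ≤ c x + β * ⟪x - P, x - P⟫ := hmin x hx
    nlinarith [h2]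
  -- let ε → 0
  intro x hx
  have hA : 0 ≤ L ^ 2 - ⟪x - P, x - P⟫ := by
    have h1 : ‖x - P‖ ≤ L := by rwa [mem_closedBall_iff_norm] at hx
    have h2 : ⟪x - P, x - P⟫ = ‖x - P‖ ^ 2 := real_inner_self_eq_norm_sq _
    nlinarith [norm_nonneg (x - P)]
  set A := L ^ 2 - ⟪x - P, x - P⟫ with hAdef
  rcases eq_or_lt_of_le hA with h0 | h0
  · have := hpos x (hclb hx)
    rw [← h0]
    simpa using this
  · by_contra hcon
    push_neg at hcon
    have hε : 0 < (K / (4 * D) * A - c x) / (2 * A) := div_pos (by linarith) (by linarith)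
    have h3 := hstep _ hε x hx
    rw [← hAdef] at h3
    have hne : (2 : ℝ) * A ≠ 0 := by positivity
    have hh : (K / (4 * D) * A - c x) / (2 * A) * (2 * A) = K / (4 * D) * A - c x :=
      div_mul_cancel₀ _ hne
    nlinarith [h3, hh, hcon]

/-- If the open disc of radius `L` centered at `P` is contained in `Ω`
and `Q ∈ ∂Ω` with `‖P − Q‖ = L`, then along the inward unit direction
`v = (P − Q)/L` a Poisson solution `c` satisfies
`c(Q + t·v) ≥ (K/(4D))·(2Lt − t²)` for `t ∈ [0, L]`; consequently, for any
gradient `gQ` of the extension of `c` at `Q` (within the closure of `Ω`), the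
directional derivative `⟪gQ, v⟫` is at least `(K/(2D))·L`, and in particular
`‖gQ‖ ≥ (K/(2D))·L`. -/
theorem poisson_disc_gradient_bound (K D L : ℝ) (hK : 0 < K) (hD : 0 < D) (hL : 0 < L)
    (Ω : Set E2) (hΩ : IsOpen Ω) (hΩb : Bornology.IsBounded Ω)
    (c : E2 → ℝ) (hc : IsPoissonSolution K D Ω c)
    (P Q : E2) (hball : Metric.ball P L ⊆ Ω) (hQ : Q ∈ frontier Ω) (hPQ : ‖P - Q‖ = L)
    (v : E2) (hv : v = L⁻¹ • (P - Q)) :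
    (∀ t ∈ Set.Icc (0 : ℝ) L, K / (4 * D) * (2 * L * t - t ^ 2) ≤ c (Q + t • v)) ∧
      ∀ gQ : E2, HasGradientWithinAt c gQ (closure Ω) Q →
        K / (2 * D) * L ≤ ⟪gQ, v⟫ ∧ K / (2 * D) * L ≤ ‖gQ‖ := by
  have hL' : L ≠ 0 := hL.ne'
  have hclb : closedBall P L ⊆ closure Ω := by
    rw [← closure_ball P hL']
    exact closure_mono hball
  -- geometry of the segment
  have hseg : ∀ t : ℝ, (Q + t • v) - P = (t / L - 1) • (P - Q) := by
    intro t
    rw [hv, smul_smul]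
    have h : t * L⁻¹ = t / L := by field_simp
    rw [h]
    module
  have hnorm : ∀ t ∈ Set.Icc (0:ℝ) L, ‖(Q + t • v) - P‖ = L - t := by
    intro t ht
    rw [hseg t, norm_smul, hPQ, Real.norm_eq_abs]
    have h1 : t / L - 1 ≤ 0 := by
      rw [sub_nonpos, div_le_one hL]; exact ht.2
    rw [abs_of_nonpos h1]
    field_simp
    ring
  have hmem : ∀ t ∈ Set.Icc (0:ℝ) L, (Q + t • v) ∈ closedBall P L := by
    intro t ht
    rw [mem_closedBall_iff_norm, hnorm t ht]
    linarith [ht.1]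
  -- Part 1
  have part1 : ∀ t ∈ Set.Icc (0 : ℝ) L, K / (4 * D) * (2 * L * t - t ^ 2) ≤ c (Q + t • v) := by
    intro t ht
    have hb := barrier_bound K D L hK hD hL Ω hΩ hΩb c hc P hball (Q + t • v) (hmem t ht)
    have hI : ⟪(Q + t • v) - P, (Q + t • v) - P⟫ = (L - t) ^ 2 := by
      rw [real_inner_self_eq_norm_sq, hnorm t ht]
    rw [hI] at hb
    have : L ^ 2 - (L - t) ^ 2 = 2 * L * t - t ^ 2 := by ring
    rw [this] at hb
    exact hb
  refine ⟨part1, ?_⟩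
  intro gQ hG
  -- derivative of t ↦ c (Q + t • v) within Icc 0 L at 0
  have hγ : HasDerivWithinAt (fun t : ℝ => Q + t • v) v (Set.Icc 0 L) 0 := by
    have h1 : HasDerivAt (fun t : ℝ => t • v) ((1:ℝ) • v) 0 := (hasDerivAt_id 0).smul_const v
    simpa using (h1.const_add Q).hasDerivWithinAt
  have hmaps : Set.MapsTo (fun t : ℝ => Q + t • v) (Set.Icc 0 L) (closure Ω) :=
    fun t ht => hclb (hmem t ht)
  have hF : HasFDerivWithinAt c (InnerProductSpace.toDual ℝ E2 gQ) (closure Ω) Q :=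
    hG.hasFDerivWithinAt
  have hQ0 : Q = Q + (0:ℝ) • v := by simp
  rw [hQ0] at hF
  have hcγ : HasDerivWithinAt (fun t : ℝ => c (Q + t • v)) ⟪gQ, v⟫ (Set.Icc 0 L) 0 := by
    have := hF.comp_hasDerivWithinAt 0 hγ hmaps
    simpa [Function.comp_def, InnerProductSpace.toDual_apply_apply] using this
  -- derivative of the lower-bound polynomial
  have hψ : HasDerivAt (fun t : ℝ => K / (4*D) * (2*L*t - t^2)) (K/(4*D) * (2*L)) 0 := by
    have h1 : HasDerivAt (fun t : ℝ => 2*L*t - t^2) (2*L) 0 := by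
      have h2 := ((hasDerivAt_id (0:ℝ)).const_mul (2*L)).sub (hasDerivAt_pow 2 (0:ℝ))
      simpa [Pi.sub_def] using h2
    simpa using h1.const_mul (K/(4*D))
  have hfd : HasDerivWithinAt
      (fun t : ℝ => c (Q + t • v) - K / (4*D) * (2*L*t - t^2))
      (⟪gQ, v⟫ - K/(4*D) * (2*L)) (Set.Icc 0 L) 0 :=
    hcγ.sub hψ.hasDerivWithinAt
  have hf0 : c (Q + (0:ℝ) • v) - K / (4*D) * (2*L*(0:ℝ) - (0:ℝ)^2) = 0 := by
    rw [← hQ0, hc.bdry Q hQ]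
    ring
  have hkey : 0 ≤ ⟪gQ, v⟫ - K/(4*D) * (2*L) := by
    apply deriv_nonneg_at_left hL hfd hf0
    intro t ht
    have := part1 t ht
    linarith
  have heq : K/(4*D) * (2*L) = K / (2*D) * L := by
    field_simp
    ring
  have hineq1 : K / (2 * D) * L ≤ ⟪gQ, v⟫ := by rw [← heq]; linarith
  refine ⟨hineq1, ?_⟩
  have hvnorm : ‖v‖ = 1 := by
    rw [hv, norm_smul, hPQ, norm_inv, Real.norm_eq_abs, abs_of_pos hL]
    field_simp
  have := real_inner_le_norm gQ v
  rw [hvnorm, mul_one] at this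
  linarith
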